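/- Let A ∈ ℝ^{d×d×d} be a symmetric 3-tensor with ‖A‖_{{1},{2},{3}} := sup{Σ A_{ijk}x_i y_j z_k : |x|,|y|,|z| ≤ 1} and ‖A‖_{{1,2},{3}} := sup{Σ A_{ijk}X_{ij}y_k : ‖X‖_F ≤ 1, |y| ≤ 1}. Then ‖A‖_{{1},{2},{3}} ≤ ‖A‖_{{1,2},{3}} ≤ √d · ‖A‖_{{1},{2},{3}}. -/
import Mathlib


open Finset

/-- Comparison of the tensor norms `‖·‖_{{1},{2},{3}}` and `‖·‖_{{1,2},{3}}`
for a symmetric 3-tensor: `‖A‖_{{1},{2},{3}} ≤ ‖A‖_{{1,2},{3}} ≤ √d ‖A‖_{{1},{2},{3}}`. -/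
theorem stmt19 {d : ℕ} (A : Fin d → Fin d → Fin d → ℝ)
    (hsymm : ∀ i j k, A i j k = A j i k ∧ A i j k = A i k j) :
    let n123 : ℝ := sSup {r : ℝ | ∃ x y z : Fin d → ℝ,
      (∑ i, x i ^ 2) ≤ 1 ∧ (∑ j, y j ^ 2) ≤ 1 ∧ (∑ k, z k ^ 2) ≤ 1 ∧
      r = ∑ i, ∑ j, ∑ k, A i j k * x i * y j * z k}
    let n12_3 : ℝ := sSup {r : ℝ | ∃ (X : Fin d → Fin d → ℝ) (y : Fin d → ℝ),
      (∑ i, ∑ j, X i j ^ 2) ≤ 1 ∧ (∑ k, y k ^ 2) ≤ 1 ∧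
      r = ∑ i, ∑ j, ∑ k, A i j k * X i j * y k}
    n123 ≤ n12_3 ∧ n12_3 ≤ Real.sqrt d * n123 := by
  classical
  intro n123 n12_3
  set S1 : Set ℝ := {r : ℝ | ∃ x y z : Fin d → ℝ,
      (∑ i, x i ^ 2) ≤ 1 ∧ (∑ j, y j ^ 2) ≤ 1 ∧ (∑ k, z k ^ 2) ≤ 1 ∧
      r = ∑ i, ∑ j, ∑ k, A i j k * x i * y j * z k} with hS1def
  set S2 : Set ℝ := {r : ℝ | ∃ (X : Fin d → Fin d → ℝ) (y : Fin d → ℝ),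
      (∑ i, ∑ j, X i j ^ 2) ≤ 1 ∧ (∑ k, y k ^ 2) ≤ 1 ∧
      r = ∑ i, ∑ j, ∑ k, A i j k * X i j * y k} with hS2def
  have h0S1 : (0 : ℝ) ∈ S1 := ⟨0, 0, 0, by simp, by simp, by simp, by simp⟩
  have h0S2 : (0 : ℝ) ∈ S2 := ⟨0, 0, by simp, by simp, by simp⟩
  have hsub : S1 ⊆ S2 := by
    rintro r ⟨x, y, z, hx, hy, hz, hr⟩
    refine ⟨fun i j => x i * y j, z, ?_, hz, ?_⟩
    · have : ∑ i, ∑ j, (x i * y j) ^ 2 = (∑ i, x i ^ 2) * ∑ j, y j ^ 2 := by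
        rw [Finset.sum_mul]
        refine Finset.sum_congr rfl fun i _ => ?_
        rw [Finset.mul_sum]
        exact Finset.sum_congr rfl fun j _ => by ring
      rw [this]
      exact mul_le_one₀ hx (Finset.sum_nonneg fun j _ => sq_nonneg _) hy
    · rw [hr]
      exact Finset.sum_congr rfl fun i _ => Finset.sum_congr rfl fun j _ =>
        Finset.sum_congr rfl fun k _ => by ring
  -- boundedness of S2
  set C : ℝ := Real.sqrt (∑ i, ∑ j, ∑ k, A i j k ^ 2) with hC
  have hbdd2 : BddAbove S2 := by
    refine ⟨C, ?_⟩
    rintro r ⟨X, y, hX, hy, hr⟩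
    set M : Fin d → Fin d → ℝ := fun i j => ∑ k, A i j k * y k with hM
    have hrM : r = ∑ p : Fin d × Fin d, X p.1 p.2 * M p.1 p.2 := by
      rw [hr, Fintype.sum_prod_type]
      refine Finset.sum_congr rfl fun i _ => Finset.sum_congr rfl fun j _ => ?_
      rw [hM, Finset.mul_sum]
      exact Finset.sum_congr rfl fun k _ => by ring
    have hcs := Real.sum_mul_le_sqrt_mul_sqrt Finset.univ
      (fun p : Fin d × Fin d => X p.1 p.2) (fun p : Fin d × Fin d => M p.1 p.2)
    have hX' : Real.sqrt (∑ p : Fin d × Fin d, X p.1 p.2 ^ 2) ≤ 1 := by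
      rw [show (1 : ℝ) = Real.sqrt 1 by simp]
      apply Real.sqrt_le_sqrt
      rw [Fintype.sum_prod_type]; exact hX
    have hM' : Real.sqrt (∑ p : Fin d × Fin d, M p.1 p.2 ^ 2) ≤ C := by
      apply Real.sqrt_le_sqrt
      rw [Fintype.sum_prod_type]
      refine Finset.sum_le_sum fun i _ => Finset.sum_le_sum fun j _ => ?_
      calc M i j ^ 2 ≤ (∑ k, A i j k ^ 2) * ∑ k, y k ^ 2 :=
            Finset.sum_mul_sq_le_sq_mul_sq _ _ _
        _ ≤ (∑ k, A i j k ^ 2) * 1 :=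
            mul_le_mul_of_nonneg_left hy (Finset.sum_nonneg fun k _ => sq_nonneg _)
        _ = ∑ k, A i j k ^ 2 := mul_one _
    calc r = ∑ p : Fin d × Fin d, X p.1 p.2 * M p.1 p.2 := hrM
      _ ≤ Real.sqrt (∑ p : Fin d × Fin d, X p.1 p.2 ^ 2) *
          Real.sqrt (∑ p : Fin d × Fin d, M p.1 p.2 ^ 2) := hcs
      _ ≤ 1 * C := mul_le_mul hX' hM' (Real.sqrt_nonneg _)
            (by linarith [Real.sqrt_nonneg (∑ p : Fin d × Fin d, X p.1 p.2 ^ 2)])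
      _ = C := one_mul _
  have hbdd1 : BddAbove S1 := hbdd2.mono hsub
  have hn123_nonneg : 0 ≤ n123 := le_csSup hbdd1 h0S1
  constructor
  · exact csSup_le_csSup hbdd2 ⟨0, h0S1⟩ hsub
  · refine csSup_le ⟨0, h0S2⟩ ?_
    rintro r ⟨X, y, hX, hy, hr⟩
    set M : Fin d → Fin d → ℝ := fun i j => ∑ k, A i j k * y k with hM
    have claim : ∀ i, Real.sqrt (∑ j, M i j ^ 2) ≤ n123 := by
      intro i
      set s : ℝ := ∑ j, M i j ^ 2 with hs
      have hsnn : 0 ≤ s := Finset.sum_nonneg fun j _ => sq_nonneg _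
      rcases eq_or_lt_of_le hsnn with h | h
      · rw [← h, Real.sqrt_zero]; exact hn123_nonneg
      · have hsqrt : 0 < Real.sqrt s := Real.sqrt_pos.2 h
        have hmem : Real.sqrt s ∈ S1 := by
          refine ⟨fun i' => if i' = i then 1 else 0, fun j => M i j / Real.sqrt s, y,
            ?_, ?_, hy, ?_⟩
          · simp [Finset.sum_ite_eq']
          · have : ∑ j, (M i j / Real.sqrt s) ^ 2 = s / s := by
              rw [Finset.sum_div]
              refine Finset.sum_congr rfl fun j _ => ?_
              rw [div_pow, Real.sq_sqrt hsnn]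
            rw [this, div_self (ne_of_gt h)]
          · have step1 : ∑ i', ∑ j, ∑ k,
                A i' j k * (if i' = i then (1:ℝ) else 0) * (M i j / Real.sqrt s) * y k
                = ∑ j, ∑ k, A i j k * (M i j / Real.sqrt s) * y k := by
              rw [Finset.sum_eq_single i]
              · simp
              · intro b _ hb
                simp [hb]
              · intro hb; exact absurd (Finset.mem_univ i) hb
            rw [step1]
            have step2 : ∀ j, ∑ k, A i j k * (M i j / Real.sqrt s) * y k
                = M i j ^ 2 / Real.sqrt s := by
              intro j
              have : ∑ k, A i j k * (M i j / Real.sqrt s) * y k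
                  = (M i j / Real.sqrt s) * ∑ k, A i j k * y k := by
                rw [Finset.mul_sum]
                exact Finset.sum_congr rfl fun k _ => by ring
              rw [this]; rw [hM]; ring
            rw [Finset.sum_congr rfl fun j _ => step2 j, ← Finset.sum_div, ← hs,
              Real.div_sqrt]
        exact le_csSup hbdd1 hmem
    have hrM : r = ∑ i, ∑ j, X i j * M i j := by
      rw [hr]
      refine Finset.sum_congr rfl fun i _ => Finset.sum_congr rfl fun j _ => ?_
      rw [hM, Finset.mul_sum]
      exact Finset.sum_congr rfl fun k _ => by ring
    have hrow : ∀ i, ∑ j, X i j * M i j ≤ Real.sqrt (∑ j, X i j ^ 2) * n123 := by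
      intro i
      calc ∑ j, X i j * M i j
          ≤ Real.sqrt (∑ j, X i j ^ 2) * Real.sqrt (∑ j, M i j ^ 2) :=
            Real.sum_mul_le_sqrt_mul_sqrt _ _ _
        _ ≤ Real.sqrt (∑ j, X i j ^ 2) * n123 :=
            mul_le_mul_of_nonneg_left (claim i) (Real.sqrt_nonneg _)
    have hsumrow : ∑ i, Real.sqrt (∑ j, X i j ^ 2) ≤ Real.sqrt d := by
      have h1 : ∑ i, Real.sqrt (∑ j, X i j ^ 2)
          = ∑ i, Real.sqrt 1 * Real.sqrt (∑ j, X i j ^ 2) := by simp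
      have h2 := Real.sum_sqrt_mul_sqrt_le (f := fun _ : Fin d => (1:ℝ))
        (g := fun i => ∑ j, X i j ^ 2) Finset.univ (fun _ => zero_le_one)
        (fun i => Finset.sum_nonneg fun j _ => sq_nonneg _)
      rw [h1]
      refine h2.trans ?_
      have : Real.sqrt (∑ _i : Fin d, (1:ℝ)) = Real.sqrt d := by simp
      rw [this]
      have hle : Real.sqrt (∑ i, ∑ j, X i j ^ 2) ≤ 1 := by
        rw [show (1 : ℝ) = Real.sqrt 1 by simp]
        exact Real.sqrt_le_sqrt hX
      calc Real.sqrt d * Real.sqrt (∑ i, ∑ j, X i j ^ 2)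
          ≤ Real.sqrt d * 1 := mul_le_mul_of_nonneg_left hle (Real.sqrt_nonneg _)
        _ = Real.sqrt d := mul_one _
    calc r = ∑ i, ∑ j, X i j * M i j := hrM
      _ ≤ ∑ i, Real.sqrt (∑ j, X i j ^ 2) * n123 := Finset.sum_le_sum fun i _ => hrow i
      _ = (∑ i, Real.sqrt (∑ j, X i j ^ 2)) * n123 := (Finset.sum_mul _ _ _).symm
      _ ≤ Real.sqrt d * n123 := mul_le_mul_of_nonneg_right hsumrow hn123_nonneg
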